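/- Let 𝕋 > 0 and κ > 0. Let X = (X_t)_{0≤t≤𝕋} be a stochastic process with continuous paths, let (V_j)_{j≥1} be i.i.d. random variables uniformly distributed on [0, 𝕋] independent of X, let γ : [0,𝕋] × ℝ → ℝ be measurable with 0 ≤ γ(t,x) ≤ κ for all (t,x), and let ψ : ℝ → [0,∞) be bounded measurable. Then ∑_{n≥1} e^{−κ𝕋} (𝕋^{n−1}/(n−1)!) · 𝔼[ψ(X_𝕋) ∏_{j=1}^{n−1} (κ − γ(V_j, X_{V_j}))] = 𝔼[ψ(X_𝕋) · exp(−∫_0^𝕋 γ(s, X_s) ds)]. -/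

import Mathlib

open MeasureTheory ProbabilityTheory Filter Topology
open scoped ENNReal

lemma psew_exists_modification {Ω : Type*} (𝕋 : ℝ) (h𝕋 : 0 < 𝕋) (X : ℝ → Ω → ℝ)
    (hXcont : ∀ ω, ContinuousOn (fun t => X t ω) (Set.Icc 0 𝕋)) :
    ∃ Z : ℝ × Ω → ℝ,
      (@Measurable (ℝ × Ω) ℝ
        (@Prod.instMeasurableSpace ℝ Ω _
          (MeasurableSpace.comap (fun ω t => X t ω) MeasurableSpace.pi)) _ Z) ∧
      ∀ t ∈ Set.Icc (0:ℝ) 𝕋, ∀ ω, Z (t, ω) = X t ω := by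
  classical
  letI mGl : MeasurableSpace Ω := MeasurableSpace.comap (fun ω t => X t ω) MeasurableSpace.pi
  set c : ℝ → ℝ := fun x => max 0 (min 𝕋 x) with hc
  have hY : Measurable (fun ω t => X t ω) := measurable_iff_comap_le.mpr le_rfl
  have hXd : ∀ d : ℝ, Measurable (fun ω => X d ω) :=
    fun d => (measurable_pi_apply d).comp hY
  have hm : ∀ m : ℕ, Measurable (fun p : ℝ × Ω => X (c ((⌊p.1 * 2 ^ m⌋ : ℤ) / 2 ^ m)) p.2) := by
    intro m
    have h1 : Measurable fun q : Ω × ℤ => X (c ((q.2 : ℝ) / 2 ^ m)) q.1 :=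
      measurable_from_prod_countable_left (fun k => hXd (c ((k : ℝ) / 2 ^ m)))
    have h2 : Measurable fun p : ℝ × Ω => (p.2, ⌊p.1 * 2 ^ m⌋) :=
      measurable_snd.prodMk ((measurable_fst.mul_const _).floor)
    exact h1.comp h2
  refine ⟨fun p => liminf (fun m => X (c ((⌊p.1 * 2 ^ m⌋ : ℤ) / 2 ^ m)) p.2) atTop,
    Measurable.liminf hm, ?_⟩
  intro t ht ω
  have hd : Tendsto (fun m : ℕ => ((⌊t * 2 ^ m⌋ : ℤ) : ℝ) / 2 ^ m) atTop (𝓝 t) := by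
    have hlow : ∀ m : ℕ, t - ((2:ℝ) ^ m)⁻¹ ≤ ((⌊t * 2 ^ m⌋ : ℤ) : ℝ) / 2 ^ m := by
      intro m
      have h2m : (0:ℝ) < 2 ^ m := by positivity
      rw [sub_le_iff_le_add, div_add' _ _ _ h2m.ne']
      rw [le_div_iff₀ h2m]
      have h1 : (2:ℝ)^m * ((2:ℝ)^m)⁻¹ = 1 := mul_inv_cancel₀ h2m.ne'
      nlinarith [Int.sub_one_lt_floor (t * 2 ^ m)]
    have hhigh : ∀ m : ℕ, ((⌊t * 2 ^ m⌋ : ℤ) : ℝ) / 2 ^ m ≤ t := by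
      intro m
      have h2m : (0:ℝ) < 2 ^ m := by positivity
      rw [div_le_iff₀ h2m]
      exact Int.floor_le _
    have htend : Tendsto (fun m : ℕ => t - ((2:ℝ) ^ m)⁻¹) atTop (𝓝 t) := by
      have : Tendsto (fun m : ℕ => ((2:ℝ) ^ m)⁻¹) atTop (𝓝 0) := by
        simpa [Function.comp_def] using tendsto_inv_atTop_zero.comp (tendsto_pow_atTop_atTop_of_one_lt
          (by norm_num : (1:ℝ) < 2))
      simpa using tendsto_const_nhds.sub this
    exact tendsto_of_tendsto_of_tendsto_of_le_of_le htend tendsto_const_nhds hlow hhigh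
  have hc_cont : Continuous c := continuous_const.max (continuous_const.min continuous_id)
  have hct : c t = t := by
    rw [hc]
    simp only
    rw [min_eq_right ht.2, max_eq_right ht.1]
  have hq : Tendsto (fun m : ℕ => c ((⌊t * 2 ^ m⌋ : ℤ) / 2 ^ m)) atTop
      (𝓝[Set.Icc (0:ℝ) 𝕋] t) := by
    rw [tendsto_nhdsWithin_iff]
    constructor
    · have := (hc_cont.tendsto t).comp hd
      rwa [hct] at this
    · filter_upwards with m
      exact ⟨le_max_left _ _, max_le h𝕋.le (min_le_left _ _)⟩
  have hXt : Tendsto (fun m : ℕ => X (c ((⌊t * 2 ^ m⌋ : ℤ) / 2 ^ m)) ω) atTop (𝓝 (X t ω)) :=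
    ((hXcont ω t ht).tendsto).comp hq
  exact hXt.liminf_eq

lemma psew_integral_prod_range {Ω : Type*} [MeasurableSpace Ω] (P : Measure Ω)
    [IsProbabilityMeasure P]
    (g : ℕ → Ω → ℝ) (hindep : iIndepFun g P)
    (hmeas : ∀ i, Measurable (g i)) (n : ℕ) :
    ∫ ω, ∏ j ∈ Finset.range n, g j ω ∂P = ∏ j ∈ Finset.range n, ∫ ω, g j ω ∂P := by
  induction n with
  | zero => simp
  | succ n ih =>
    have h1 : IndepFun (∏ j ∈ Finset.range n, g j) (g n) P :=
      hindep.indepFun_prod_range_succ hmeas n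
    have hpm : Measurable (∏ j ∈ Finset.range n, g j) := by
      rw [show (∏ j ∈ Finset.range n, g j) = fun ω => ∏ j ∈ Finset.range n, g j ω from
        funext fun ω => by simp [Finset.prod_apply]]
      exact Finset.measurable_prod _ (fun i _ => hmeas i)
    have h2 := h1.integral_mul_eq_mul_integral hpm.aestronglyMeasurable (hmeas n).aestronglyMeasurable
    simp only [Finset.prod_range_succ]
    calc ∫ ω, (∏ j ∈ Finset.range n, g j ω) * g n ω ∂P
        = ∫ ω, ((∏ j ∈ Finset.range n, g j) * g n) ω ∂P := by
          congr 1; funext ω; simp [Finset.prod_apply]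
      _ = (∫ ω, (∏ j ∈ Finset.range n, g j) ω ∂P) * ∫ ω, g n ω ∂P := h2
      _ = (∫ ω, ∏ j ∈ Finset.range n, g j ω ∂P) * ∫ ω, g n ω ∂P := by
          congr 1; apply integral_congr_ae; filter_upwards with ω; simp [Finset.prod_apply]
      _ = (∏ j ∈ Finset.range n, ∫ ω, g j ω ∂P) * ∫ ω, g n ω ∂P := by rw [ih]


lemma psew_sm_integral {Ω : Type*} {m' : MeasurableSpace Ω} (ν : Measure ℝ) [SFinite ν]
    (f : Ω × ℝ → ℝ)
    (hf : @Measurable (Ω × ℝ) ℝ (@Prod.instMeasurableSpace Ω ℝ m' _) _ f) :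
    StronglyMeasurable[m'] (fun ω => ∫ s, f (ω, s) ∂ν) :=
  hf.stronglyMeasurable.integral_prod_right'

lemma psew_trim_prob {Ω : Type*} {m' mΩ : MeasurableSpace Ω} (P : @Measure Ω mΩ)
    [IsProbabilityMeasure P] (hm' : m' ≤ mΩ) : IsProbabilityMeasure (P.trim hm') :=
  ⟨by rw [trim_measurableSet_eq hm' MeasurableSet.univ]; exact measure_univ⟩

lemma psew_map_id_eq_trim {Ω : Type*} {m' mΩ : MeasurableSpace Ω} (P : @Measure Ω mΩ)
    (hm' : m' ≤ mΩ) : @Measure.map Ω Ω mΩ m' id P = P.trim hm' := by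
  refine @Measure.ext Ω m' _ _ fun s hs => ?_
  rw [Measure.map_apply (measurable_id'' hm') hs, trim_measurableSet_eq hm' hs, Set.preimage_id]

lemma psew_fubini {Ω E : Type*} {mΩ : MeasurableSpace Ω} {mE : MeasurableSpace E}
    {m' : MeasurableSpace Ω} (hm' : m' ≤ mΩ) (P : @Measure Ω mΩ) [IsProbabilityMeasure P]
    (W : Ω → E) (hW : @Measurable Ω E mΩ mE W)
    (hIndep : @Indep Ω (MeasurableSpace.comap W mE) m' mΩ P)
    (Φ : E × Ω → ℝ)
    (hΦ : @Measurable (E × Ω) ℝ (@Prod.instMeasurableSpace E Ω mE m') _ Φ)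
    (M : ℝ)
    (hbd : ∀ᵐ w ∂(@Measure.map Ω E mΩ mE W P), ∀ ω, |Φ (w, ω)| ≤ M)
    (F : Ω → ℝ) (hF : StronglyMeasurable[m'] F)
    (hFeq : ∀ ω, ∫ w, Φ (w, ω) ∂(@Measure.map Ω E mΩ mE W P) = F ω) :
    ∫ ω, Φ (W ω, ω) ∂P = ∫ ω, F ω ∂P := by
  set PW : @Measure E mE := @Measure.map Ω E mΩ mE W P with hPW
  haveI : IsProbabilityMeasure PW := Measure.isProbabilityMeasure_map hW.aemeasurable
  haveI : IsProbabilityMeasure (P.trim hm') := psew_trim_prob P hm'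
  have hid : @Measurable Ω Ω mΩ m' id := measurable_id'' hm'
  have hIndepF : @IndepFun Ω E Ω mΩ mE m' W id P := by
    refine (IndepFun_iff_Indep W id P).mpr ?_
    rwa [MeasurableSpace.comap_id]
  have hlaw : @Measure.map Ω (E × Ω) mΩ (@Prod.instMeasurableSpace E Ω mE m')
      (fun ω => (W ω, ω)) P = PW.prod (P.trim hm') := by
    have h := (indepFun_iff_map_prod_eq_prod_map_map hW.aemeasurable hid.aemeasurable).mp hIndepF
    rwa [psew_map_id_eq_trim P hm'] at h
  have hpairm : @Measurable Ω (E × Ω) mΩ (@Prod.instMeasurableSpace E Ω mE m')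
      (fun ω => (W ω, ω)) := hW.prodMk hid
  have hΦint : Integrable Φ (PW.prod (P.trim hm')) := by
    obtain ⟨N, hNsub, hNmeas, hNnull⟩ := exists_measurable_superset_of_null (ae_iff.mp hbd)
    have hprodnull : (PW.prod (P.trim hm')) (N ×ˢ (Set.univ : Set Ω)) = 0 := by
      rw [Measure.prod_prod, hNnull, zero_mul]
    refine Integrable.mono' (integrable_const M) hΦ.aestronglyMeasurable ?_
    rw [ae_iff]
    refine measure_mono_null (fun p hp => ?_) hprodnull
    simp only [Set.mem_setOf_eq] at hp
    by_contra hpN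
    have hp1 : p.1 ∉ N := fun h => hpN ⟨h, trivial⟩
    have : ∀ ω, |Φ (p.1, ω)| ≤ M := by
      by_contra hcon
      exact hp1 (hNsub hcon)
    exact hp (by simpa [Real.norm_eq_abs] using this p.2)
  calc ∫ ω, Φ (W ω, ω) ∂P
      = ∫ p, Φ p ∂(@Measure.map Ω (E × Ω) mΩ (@Prod.instMeasurableSpace E Ω mE m')
          (fun ω => (W ω, ω)) P) := by
        refine (integral_map hpairm.aemeasurable ?_).symm
        rw [hlaw]
        exact hΦ.aestronglyMeasurable
    _ = ∫ p, Φ p ∂(PW.prod (P.trim hm')) := by rw [hlaw]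
    _ = ∫ ω, (∫ w, Φ (w, ω) ∂PW) ∂(P.trim hm') := integral_prod_symm Φ hΦint
    _ = ∫ ω, F ω ∂(P.trim hm') :=
        integral_congr_ae (Filter.Eventually.of_forall fun ω => hFeq ω)
    _ = ∫ ω, F ω ∂P := (integral_trim hm' hF).symm

@[reducible] def psewG {Ω : Type*} (X : ℝ → Ω → ℝ) : MeasurableSpace Ω :=
  MeasurableSpace.comap (fun ω t => X t ω) MeasurableSpace.pi

theorem poisson_series_exponential_weight
    {Ω : Type*} [MeasurableSpace Ω] (P : Measure Ω) [IsProbabilityMeasure P]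
    (𝕋 κ : ℝ) (h𝕋 : 0 < 𝕋) (hκ : 0 < κ)
    (X : ℝ → Ω → ℝ)
    (hXcont : ∀ ω, ContinuousOn (fun t => X t ω) (Set.Icc 0 𝕋))
    (hXmeas : Measurable fun p : ℝ × Ω => X p.1 p.2)
    (V : ℕ → Ω → ℝ) (hVmeas : ∀ j, Measurable (V j))
    (hViid : iIndepFun V P)
    (hVunif : ∀ j, Measure.map (V j) P =
      (ENNReal.ofReal 𝕋)⁻¹ • volume.restrict (Set.Icc (0:ℝ) 𝕋))
    (hVX : Indep (⨆ j, MeasurableSpace.comap (V j) inferInstance)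
      (MeasurableSpace.comap (fun ω t => X t ω) MeasurableSpace.pi) P)
    (γ : ℝ → ℝ → ℝ) (hγmeas : Measurable fun p : ℝ × ℝ => γ p.1 p.2)
    (hγ : ∀ t ∈ Set.Icc (0:ℝ) 𝕋, ∀ x : ℝ, 0 ≤ γ t x ∧ γ t x ≤ κ)
    (ψ : ℝ → ℝ) (hψmeas : Measurable ψ) (hψpos : ∀ x, 0 ≤ ψ x)
    (C : ℝ) (hψbdd : ∀ x, ψ x ≤ C) :
    ∑' n : ℕ,
        Real.exp (-κ * 𝕋) * (𝕋 ^ n / (Nat.factorial n : ℝ)) *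
          ∫ ω, ψ (X 𝕋 ω) * ∏ j : Fin n, (κ - γ (V j ω) (X (V j ω) ω)) ∂P =
      ∫ ω, ψ (X 𝕋 ω) * Real.exp (-∫ s in (0:ℝ)..𝕋, γ s (X s ω)) ∂P := by
  classical
  obtain ⟨Z, hZmG, hZeq⟩ := psew_exists_modification 𝕋 h𝕋 X hXcont
  have hG_le : psewG X ≤ ‹MeasurableSpace Ω› := by
    rw [show psewG X = MeasurableSpace.comap (fun ω t => X t ω) MeasurableSpace.pi from rfl,
      ← measurable_iff_comap_le]
    exact measurable_pi_lambda _ (fun t => hXmeas.comp measurable_prodMk_left)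
  have hZm : Measurable Z := by
    have h : @Measurable (ℝ × Ω) (ℝ × Ω) _ (@Prod.instMeasurableSpace ℝ Ω _ (psewG X))
        (fun p => (p.1, p.2)) :=
      Measurable.prodMk measurable_fst ((measurable_id'' hG_le).comp measurable_snd)
    exact hZmG.comp h
  have hZsec : ∀ ω, Measurable (fun s => Z (s, ω)) :=
    fun ω => hZm.comp (measurable_id.prodMk measurable_const)
  have hZTG : Measurable[(psewG X)] (fun ω => Z (𝕋, ω)) := by
    have h : @Measurable Ω (ℝ × Ω) (psewG X) (@Prod.instMeasurableSpace ℝ Ω _ (psewG X)) (fun ω => (𝕋, ω)) :=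
      Measurable.prodMk measurable_const measurable_id
    exact hZmG.comp h
  have hZT : Measurable (fun ω => Z (𝕋, ω)) := hZTG.mono hG_le le_rfl
  have hφm : ∀ ω, Measurable (fun s : ℝ => κ - γ s (Z (s, ω))) := fun ω =>
    measurable_const.sub (hγmeas.comp (measurable_id.prodMk (hZsec ω)))
  set g0 : Ω → ℝ := fun ω => ∫ s in (0:ℝ)..𝕋, γ s (Z (s, ω)) with hg0
  set a : Ω → ℝ := fun ω => ∫ s in (0:ℝ)..𝕋, (κ - γ s (Z (s, ω))) with ha
  set b : Ω → ℝ := fun ω => 𝕋⁻¹ * a ω with hb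
  -- integrability on [0,𝕋]
  have hγZint : ∀ ω, IntervalIntegrable (fun s => γ s (Z (s, ω))) volume 0 𝕋 := by
    intro ω
    rw [intervalIntegrable_iff_integrableOn_Ioc_of_le h𝕋.le]
    refine Integrable.mono' (integrable_const κ)
      ((hγmeas.comp (measurable_id.prodMk (hZsec ω))).aestronglyMeasurable) ?_
    filter_upwards [ae_restrict_mem measurableSet_Ioc] with s hs
    have h := hγ s ⟨hs.1.le, hs.2⟩ (Z (s, ω))
    rw [Real.norm_eq_abs, abs_of_nonneg h.1]; exact h.2
  have haint : ∀ ω, IntervalIntegrable (fun s => κ - γ s (Z (s, ω))) volume 0 𝕋 :=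
    fun ω => intervalIntegrable_const.sub (hγZint ω)
  have ha_eq : ∀ ω, a ω = κ * 𝕋 - g0 ω := by
    intro ω
    rw [ha, hg0]; simp only
    rw [intervalIntegral.integral_sub intervalIntegrable_const (hγZint ω),
      intervalIntegral.integral_const]
    simp [smul_eq_mul]; ring
  have ha_nonneg : ∀ ω, 0 ≤ a ω := fun ω =>
    intervalIntegral.integral_nonneg h𝕋.le (fun s hs => sub_nonneg.mpr (hγ s hs _).2)
  have ha_le : ∀ ω, a ω ≤ κ * 𝕋 := by
    intro ω
    have h1 : a ω ≤ ∫ _ in (0:ℝ)..𝕋, κ := by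
      refine intervalIntegral.integral_mono_on h𝕋.le (haint ω) intervalIntegrable_const ?_
      intro s hs
      have := (hγ s hs (Z (s, ω))).1
      linarith
    rwa [intervalIntegral.integral_const, sub_zero, smul_eq_mul, mul_comm] at h1
  have hb_nonneg : ∀ ω, 0 ≤ b ω := fun ω =>
    mul_nonneg (inv_nonneg.mpr h𝕋.le) (ha_nonneg ω)
  have hb_le : ∀ ω, b ω ≤ κ := by
    intro ω
    rw [hb]; simp only
    rw [inv_mul_le_iff₀ h𝕋]
    exact (ha_le ω).trans_eq (mul_comm κ 𝕋)
  -- strong measurability of a w.r.t. (psewG X)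
  have hpairswap : @Measurable (Ω × ℝ) (ℝ × Ω) (@Prod.instMeasurableSpace Ω ℝ (psewG X) _)
      (@Prod.instMeasurableSpace ℝ Ω _ (psewG X)) (fun q => (q.2, q.1)) :=
    Measurable.prodMk measurable_snd measurable_fst
  have hintegrandG : @Measurable (Ω × ℝ) ℝ (@Prod.instMeasurableSpace Ω ℝ (psewG X) _) _
      (fun q => κ - γ q.2 (Z (q.2, q.1))) := by
    refine Measurable.sub measurable_const ?_
    exact hγmeas.comp (Measurable.prodMk measurable_snd (hZmG.comp hpairswap))
  have haSM : StronglyMeasurable[(psewG X)] a := by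
    have h1 : StronglyMeasurable[(psewG X)]
        (fun ω => ∫ s in Set.Ioc (0:ℝ) 𝕋, (κ - γ s (Z (s, ω))) ∂volume) :=
      psew_sm_integral (volume.restrict (Set.Ioc (0:ℝ) 𝕋))
        (fun q => κ - γ q.2 (Z (q.2, q.1))) hintegrandG
    have h2 : a = fun ω => ∫ s in Set.Ioc (0:ℝ) 𝕋, (κ - γ s (Z (s, ω))) ∂volume := by
      funext ω; rw [ha]; simp only; rw [intervalIntegral.integral_of_le h𝕋.le]
    rw [h2]; exact h1
  have hbSM : StronglyMeasurable[(psewG X)] b := haSM.const_mul 𝕋⁻¹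
  have hbm : Measurable b := (hbSM.mono hG_le).measurable
  have hψZSM : StronglyMeasurable[(psewG X)] (fun ω => ψ (Z (𝕋, ω))) :=
    (hψmeas.comp hZTG).stronglyMeasurable
  have hCnn : 0 ≤ C := le_trans (hψpos 0) (hψbdd 0)
  -- null sets
  have hVIcc : ∀ j : ℕ, P {ω | V j ω ∉ Set.Icc (0:ℝ) 𝕋} = 0 := by
    intro j
    have h1 : P (V j ⁻¹' (Set.Icc (0:ℝ) 𝕋)ᶜ) = (P.map (V j)) (Set.Icc (0:ℝ) 𝕋)ᶜ :=
      (Measure.map_apply (hVmeas j) measurableSet_Icc.compl).symm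
    rw [hVunif j] at h1
    have h2 : ((ENNReal.ofReal 𝕋)⁻¹ • volume.restrict (Set.Icc (0:ℝ) 𝕋))
        (Set.Icc (0:ℝ) 𝕋)ᶜ = 0 := by
      rw [Measure.smul_apply, Measure.restrict_apply measurableSet_Icc.compl]
      simp
    rw [h2] at h1
    exact h1
  -- the key identity for each n
  have key : ∀ n : ℕ,
      ∫ ω, ψ (X 𝕋 ω) * ∏ j : Fin n, (κ - γ (V j ω) (X (V j ω) ω)) ∂P
        = ∫ ω, ψ (Z (𝕋, ω)) * (b ω) ^ n ∂P := by
    intro n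
    have hae : ∀ᵐ ω ∂P, ∀ j : Fin n, V (j : ℕ) ω ∈ Set.Icc (0:ℝ) 𝕋 := by
      rw [ae_iff]
      refine measure_mono_null ?_ (measure_iUnion_null fun j : Fin n => hVIcc (j : ℕ))
      intro ω hω
      simp only [Set.mem_setOf_eq] at hω
      push_neg at hω
      obtain ⟨j, hj⟩ := hω
      exact Set.mem_iUnion.mpr ⟨j, hj⟩
    have hcongr1 : ∫ ω, ψ (X 𝕋 ω) * ∏ j : Fin n, (κ - γ (V j ω) (X (V j ω) ω)) ∂P
        = ∫ ω, ψ (Z (𝕋, ω)) * ∏ j : Fin n, (κ - γ (V j ω) (Z (V j ω, ω))) ∂P := by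
      refine integral_congr_ae ?_
      filter_upwards [hae] with ω hω
      rw [hZeq 𝕋 ⟨h𝕋.le, le_rfl⟩ ω]
      congr 1
      exact Finset.prod_congr rfl fun j _ => by rw [hZeq (V j ω) (hω j) ω]
    set W : Ω → (Fin n → ℝ) := fun ω j => V j ω with hWdef
    have hWm : Measurable W := measurable_pi_lambda _ (fun j => hVmeas j)
    set Φ : (Fin n → ℝ) × Ω → ℝ :=
      fun p => ψ (Z (𝕋, p.2)) * ∏ j : Fin n, (κ - γ (p.1 j) (Z (p.1 j, p.2))) with hΦdef
    have hΦm : @Measurable ((Fin n → ℝ) × Ω) ℝ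
        (@Prod.instMeasurableSpace _ Ω _ (psewG X)) _ Φ := by
      have hsnd : @Measurable ((Fin n → ℝ) × Ω) Ω
          (@Prod.instMeasurableSpace _ Ω _ (psewG X)) (psewG X) Prod.snd := measurable_snd
      have h2 : @Measurable ((Fin n → ℝ) × Ω) (ℝ × Ω)
          (@Prod.instMeasurableSpace _ Ω _ (psewG X)) (@Prod.instMeasurableSpace ℝ Ω _ (psewG X))
          (fun p => (𝕋, p.2)) := Measurable.prodMk measurable_const hsnd
      have h3 : ∀ j : Fin n, @Measurable ((Fin n → ℝ) × Ω) (ℝ × Ω)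
          (@Prod.instMeasurableSpace _ Ω _ (psewG X)) (@Prod.instMeasurableSpace ℝ Ω _ (psewG X))
          (fun p => (p.1 j, p.2)) :=
        fun j => Measurable.prodMk ((measurable_pi_apply j).comp measurable_fst) hsnd
      refine Measurable.mul (hψmeas.comp (hZmG.comp h2)) ?_
      refine Finset.measurable_prod _ (fun j _ => ?_)
      exact Measurable.sub measurable_const (hγmeas.comp
        (Measurable.prodMk ((measurable_pi_apply j).comp measurable_fst)
          (hZmG.comp (h3 j))))
    have hcomapW : MeasurableSpace.comap W MeasurableSpace.pi
        ≤ ⨆ j, MeasurableSpace.comap (V j) inferInstance := by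
      rw [MeasurableSpace.pi, MeasurableSpace.comap_iSup]
      refine iSup_le fun i => ?_
      rw [MeasurableSpace.comap_comp]
      exact le_iSup (fun j : ℕ => MeasurableSpace.comap (V j) inferInstance) (i : ℕ)
    have hIndepWG : Indep (MeasurableSpace.comap W MeasurableSpace.pi) (psewG X) P :=
      indep_of_indep_of_le_left hVX hcomapW
    -- a.e. bound on the first marginal
    have hAmeas : MeasurableSet {w : Fin n → ℝ | ∀ j, w j ∈ Set.Icc (0:ℝ) 𝕋} := by
      rw [Set.setOf_forall]
      exact MeasurableSet.iInter fun j => (measurable_pi_apply j) measurableSet_Icc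
    have hπA : (P.map W) ({w : Fin n → ℝ | ∀ j, w j ∈ Set.Icc (0:ℝ) 𝕋}ᶜ) = 0 := by
      rw [Measure.map_apply hWm hAmeas.compl]
      refine measure_mono_null ?_ (measure_iUnion_null fun j : Fin n => hVIcc (j : ℕ))
      intro ω hω
      simp only [Set.mem_preimage, Set.mem_compl_iff, Set.mem_setOf_eq] at hω
      push_neg at hω
      obtain ⟨j, hj⟩ := hω
      exact Set.mem_iUnion.mpr ⟨j, hj⟩
    have hbd : ∀ᵐ w ∂(P.map W), ∀ ω, |Φ (w, ω)| ≤ C * κ ^ n := by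
      rw [ae_iff]
      refine measure_mono_null (fun w hw => ?_) hπA
      simp only [Set.mem_setOf_eq] at hw
      push_neg at hw
      obtain ⟨ω, hω⟩ := hw
      simp only [Set.mem_compl_iff, Set.mem_setOf_eq]
      intro hall
      have hle : |Φ (w, ω)| ≤ C * κ ^ n := by
        rw [hΦdef]; simp only
        rw [abs_mul]
        have h1 : |ψ (Z (𝕋, ω))| ≤ C := by
          rw [abs_of_nonneg (hψpos _)]; exact hψbdd _
        have h2 : |∏ j : Fin n, (κ - γ (w j) (Z (w j, ω)))| ≤ κ ^ n := by
          rw [abs_of_nonneg (Finset.prod_nonneg fun j _ => sub_nonneg.mpr (hγ _ (hall j) _).2)]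
          calc ∏ j : Fin n, (κ - γ (w j) (Z (w j, ω))) ≤ ∏ _j : Fin n, κ :=
                Finset.prod_le_prod (fun j _ => sub_nonneg.mpr (hγ _ (hall j) _).2)
                  (fun j _ => by have := (hγ _ (hall j) (Z (w j, ω))).1; linarith)
            _ = κ ^ n := by simp
        exact mul_le_mul h1 h2 (abs_nonneg _) hCnn
      exact absurd hle (not_le.mpr hω)
    have hFSM : StronglyMeasurable[(psewG X)] (fun ω => ψ (Z (𝕋, ω)) * (b ω) ^ n) :=
      hψZSM.mul (hbSM.pow n)
    have hFeq : ∀ ω', ∫ w, Φ (w, ω') ∂(P.map W) = ψ (Z (𝕋, ω')) * (b ω') ^ n := by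
      intro ω'
      have hinner : ∫ w, ∏ j : Fin n, (κ - γ (w j) (Z (w j, ω'))) ∂(P.map W) = (b ω') ^ n := by
        have hfprodm : Measurable (fun w : Fin n → ℝ =>
            ∏ j : Fin n, (κ - γ (w j) (Z (w j, ω')))) := by
          refine Finset.measurable_prod _ (fun j _ => ?_)
          exact ((hφm ω').comp (measurable_pi_apply j))
        have hm1 : ∫ w, ∏ j : Fin n, (κ - γ (w j) (Z (w j, ω'))) ∂(P.map W)
            = ∫ ω'', ∏ j : Fin n, (κ - γ (V j ω'') (Z (V j ω'', ω'))) ∂P := by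
          rw [integral_map hWm.aemeasurable hfprodm.aestronglyMeasurable]
        have hm2 : ∫ ω'', ∏ j : Fin n, (κ - γ (V j ω'') (Z (V j ω'', ω'))) ∂P
            = ∏ j ∈ Finset.range n, ∫ ω'', (κ - γ (V j ω'') (Z (V j ω'', ω'))) ∂P := by
          have h := psew_integral_prod_range P
            (fun j ω'' => κ - γ (V j ω'') (Z (V j ω'', ω')))
            (hViid.comp (fun _ s => κ - γ s (Z (s, ω'))) (fun _ => hφm ω'))
            (fun j => (hφm ω').comp (hVmeas j)) n
          rw [← h]
          congr 1
          funext ω''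
          exact Fin.prod_univ_eq_prod_range
            (fun j => κ - γ (V j ω'') (Z (V j ω'', ω'))) n
        have hfac : ∀ j : ℕ, ∫ ω'', (κ - γ (V j ω'') (Z (V j ω'', ω'))) ∂P = b ω' := by
          intro j
          have h1 : ∫ ω'', (κ - γ (V j ω'') (Z (V j ω'', ω'))) ∂P
              = ∫ s, (κ - γ s (Z (s, ω'))) ∂(P.map (V j)) :=
            (integral_map (hVmeas j).aemeasurable (hφm ω').aestronglyMeasurable).symm
          rw [h1, hVunif j, integral_smul_measure]
          rw [ENNReal.toReal_inv, ENNReal.toReal_ofReal h𝕋.le]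
          have h2 : ∫ s in Set.Icc (0:ℝ) 𝕋, (κ - γ s (Z (s, ω'))) = a ω' := by
            rw [integral_Icc_eq_integral_Ioc, ha]
            simp only
            rw [intervalIntegral.integral_of_le h𝕋.le]
          rw [smul_eq_mul, h2, hb]
        rw [hm1, hm2]
        calc ∏ j ∈ Finset.range n, ∫ ω'', (κ - γ (V j ω'') (Z (V j ω'', ω'))) ∂P
            = ∏ _j ∈ Finset.range n, b ω' := Finset.prod_congr rfl (fun j _ => hfac j)
          _ = (b ω') ^ n := by rw [Finset.prod_const, Finset.card_range]
      calc ∫ w, Φ (w, ω') ∂(P.map W)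
          = ∫ w : Fin n → ℝ,
              ψ (Z (𝕋, ω')) * ∏ j : Fin n, (κ - γ (w j) (Z (w j, ω'))) ∂(P.map W) := rfl
        _ = ψ (Z (𝕋, ω')) * ∫ w, ∏ j : Fin n, (κ - γ (w j) (Z (w j, ω'))) ∂(P.map W) :=
            integral_const_mul _ _
        _ = ψ (Z (𝕋, ω')) * (b ω') ^ n := by rw [hinner]
    have hfub := psew_fubini hG_le P W hWm hIndepWG Φ hΦm (C * κ ^ n) hbd
      (fun ω => ψ (Z (𝕋, ω)) * (b ω) ^ n) hFSM hFeq
    rw [hcongr1]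
    exact hfub

  -- summation step
  set f : ℕ → Ω → ℝ := fun k ω =>
    Real.exp (-κ * 𝕋) * (𝕋 ^ k / (Nat.factorial k : ℝ)) * (ψ (Z (𝕋, ω)) * (b ω) ^ k) with hfdef
  have hfmeas : ∀ k, AEStronglyMeasurable (f k) P := by
    intro k
    exact (((hψmeas.comp hZT).mul (hbm.pow_const k)).const_mul _).aestronglyMeasurable
  have hfbound : ∀ k ω, ‖f k ω‖ ≤ Real.exp (-κ * 𝕋) * C * ((κ * 𝕋) ^ k / (Nat.factorial k)) := by
    intro k ω
    have hck : 0 ≤ Real.exp (-κ * 𝕋) * (𝕋 ^ k / (Nat.factorial k : ℝ)) := by positivity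
    have hψk : 0 ≤ ψ (Z (𝕋, ω)) * (b ω) ^ k :=
      mul_nonneg (hψpos _) (pow_nonneg (hb_nonneg ω) k)
    rw [hfdef]; simp only
    rw [Real.norm_eq_abs, abs_of_nonneg (mul_nonneg hck hψk)]
    have h1 : ψ (Z (𝕋, ω)) * (b ω) ^ k ≤ C * κ ^ k :=
      mul_le_mul (hψbdd _) (pow_le_pow_left₀ (hb_nonneg ω) (hb_le ω) k)
        (pow_nonneg (hb_nonneg ω) k) hCnn
    calc Real.exp (-κ * 𝕋) * (𝕋 ^ k / (Nat.factorial k : ℝ)) * (ψ (Z (𝕋, ω)) * (b ω) ^ k)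
        ≤ Real.exp (-κ * 𝕋) * (𝕋 ^ k / (Nat.factorial k : ℝ)) * (C * κ ^ k) :=
          mul_le_mul_of_nonneg_left h1 hck
      _ = Real.exp (-κ * 𝕋) * C * ((κ * 𝕋) ^ k / (Nat.factorial k)) := by
          rw [mul_pow]; ring
  have hsumB : Summable (fun k => Real.exp (-κ * 𝕋) * C * ((κ * 𝕋) ^ k / (Nat.factorial k))) :=
    (Real.summable_pow_div_factorial (κ * 𝕋)).mul_left _
  have hlint : ∑' k, ∫⁻ ω, ‖f k ω‖₊ ∂P ≠ ∞ := by
    have hle : ∀ k, ∫⁻ ω, ‖f k ω‖₊ ∂P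
        ≤ ENNReal.ofReal (Real.exp (-κ * 𝕋) * C * ((κ * 𝕋) ^ k / (Nat.factorial k))) := by
      intro k
      calc ∫⁻ ω, ‖f k ω‖₊ ∂P
          ≤ ∫⁻ _, ENNReal.ofReal (Real.exp (-κ * 𝕋) * C * ((κ * 𝕋) ^ k / (Nat.factorial k))) ∂P := by
            refine lintegral_mono fun ω => ?_
            rw [← enorm_eq_nnnorm, ← ofReal_norm]
            exact ENNReal.ofReal_le_ofReal (hfbound k ω)
        _ = ENNReal.ofReal (Real.exp (-κ * 𝕋) * C * ((κ * 𝕋) ^ k / (Nat.factorial k))) := by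
            rw [lintegral_const, measure_univ, mul_one]
    refine ne_top_of_le_ne_top ?_ (ENNReal.tsum_le_tsum hle)
    rw [← ENNReal.ofReal_tsum_of_nonneg (fun k => by positivity) hsumB]
    exact ENNReal.ofReal_ne_top
  have hpt : ∀ ω, ∑' k, f k ω = ψ (Z (𝕋, ω)) * Real.exp (-g0 ω) := by
    intro ω
    have h1 : ∀ k, f k ω
        = (Real.exp (-κ * 𝕋) * ψ (Z (𝕋, ω))) * ((a ω) ^ k / (Nat.factorial k)) := by
      intro k
      have h𝕋b : (a ω) ^ k = 𝕋 ^ k * (b ω) ^ k := by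
        rw [← mul_pow, hb]
        simp only
        rw [← mul_assoc, mul_inv_cancel₀ h𝕋.ne', one_mul]
      rw [hfdef]; simp only
      rw [h𝕋b]; ring
    rw [tsum_congr h1, tsum_mul_left]
    have hexp : ∑' k, (a ω) ^ k / (Nat.factorial k : ℝ) = Real.exp (a ω) := by
      rw [Real.exp_eq_exp_ℝ, NormedSpace.exp_eq_tsum_div]
    rw [hexp, ha_eq ω]
    calc Real.exp (-κ * 𝕋) * ψ (Z (𝕋, ω)) * Real.exp (κ * 𝕋 - g0 ω)
        = ψ (Z (𝕋, ω)) * (Real.exp (-κ * 𝕋) * Real.exp (κ * 𝕋 - g0 ω)) := by ring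
      _ = ψ (Z (𝕋, ω)) * Real.exp (-g0 ω) := by
          rw [← Real.exp_add]; ring_nf
  have hfinal : ∫ ω, ψ (Z (𝕋, ω)) * Real.exp (-g0 ω) ∂P
      = ∫ ω, ψ (X 𝕋 ω) * Real.exp (-∫ s in (0:ℝ)..𝕋, γ s (X s ω)) ∂P := by
    refine integral_congr_ae (Filter.Eventually.of_forall fun ω => ?_)
    show ψ (Z (𝕋, ω)) * Real.exp (-g0 ω)
        = ψ (X 𝕋 ω) * Real.exp (-∫ s in (0:ℝ)..𝕋, γ s (X s ω))
    rw [hZeq 𝕋 ⟨h𝕋.le, le_rfl⟩ ω]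
    have h1 : ∫ s in (0:ℝ)..𝕋, γ s (Z (s, ω)) = ∫ s in (0:ℝ)..𝕋, γ s (X s ω) := by
      refine intervalIntegral.integral_congr (fun s hs => ?_)
      rw [Set.uIcc_of_le h𝕋.le] at hs
      rw [hZeq s hs ω]
    rw [show g0 ω = ∫ s in (0:ℝ)..𝕋, γ s (Z (s, ω)) from rfl, h1]
  calc ∑' n : ℕ, Real.exp (-κ * 𝕋) * (𝕋 ^ n / (Nat.factorial n : ℝ)) *
          ∫ ω, ψ (X 𝕋 ω) * ∏ j : Fin n, (κ - γ (V j ω) (X (V j ω) ω)) ∂P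
      = ∑' k : ℕ, ∫ ω, f k ω ∂P := by
        refine tsum_congr fun k => ?_
        rw [key k, hfdef]
        simp only
        rw [integral_const_mul]
    _ = ∫ ω, ∑' k, f k ω ∂P := (integral_tsum hfmeas hlint).symm
    _ = ∫ ω, ψ (Z (𝕋, ω)) * Real.exp (-g0 ω) ∂P :=
        integral_congr_ae (Filter.Eventually.of_forall fun ω => hpt ω)
    _ = ∫ ω, ψ (X 𝕋 ω) * Real.exp (-∫ s in (0:ℝ)..𝕋, γ s (X s ω)) ∂P := hfinal
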